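/- There exists a pair of confounded MDPs that are observationally indistinguishable under their respective behavior policies yet have evaluation-policy values differing by exactly 2εH. Concretely, let ε ∈ [0, 1/2] and z₁, z₂ ∈ [0,1], and define two confounded MDPs M₁, M₂ on S = {1,2}, U = {1,2}, A = {1,2} with state-independent transitions: P₁(u=1) = 1/2 − ε, P₁(u=2) = 1/2 + ε; P₂(u=1) = 1/2 + ε, P₂(u=2) = 1/2 − ε; for both MDPs T_i(s'=1 | u=1, a=1) = 0 and T_i(s'=1 | u=2, a=1) = 1; T₁(s'=1 | u=1, a=2) = z₁, T₁(s'=1 | u=2, a=2) = z₂, T₂(s'=1 | u=1, a=2) = z₂, T₂(s'=1 | u=2, a=2) = z₁; behavior policies π_{b1}(a=1 | s, u=1) = 1/2 + ε, π_{b1}(a=1 | s, u=2) = 1/2 − ε, π_{b2}(a=1 | s, u=1) = 1/2 − ε, π_{b2}(a=1 | s, u=2) = 1/2 + ε. Then: (a) for all s, a, s' ∈ {1,2}, Σ_u P₁(u)·π_{b1}(a|s,u)·T₁(s'|u,a) = Σ_u P₂(u)·π_{b2}(a|s,u)·T₂(s'|u,a), i.e. the observed joint data distributions agree; and (b) setting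 p_i := Σ_u P_i(u)·T_i(s'=1 | u, a=1), one has p₁ − p₂ = 2ε, and hence for the evaluation policy π_e(a=1|s) = 1 the H-step values V_1^{π_e}(M_i) = H·p_i (defined by V_{H+1} = 0, V_h = p_i·(r(1) + V_{h+1}(1)) + (1−p_i)·(r(2) + V_{h+1}(2)) with r(1)=1, r(2)=0) satisfy V_1^{π_e}(M₁) − V_1^{π_e}(M₂) = 2εH. -/
import Mathlib


open Finset

noncomputable section

/-- Confounder distribution of MDP `M₁`: `P₁(u=1) = 1/2 − ε`, `P₁(u=2) = 1/2 + ε`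
(confounder `u=1` is index `0`, `u=2` is index `1`). -/
def Pconf1 (ε : ℝ) (u : Fin 2) : ℝ := if u = 0 then 1 / 2 - ε else 1 / 2 + ε

/-- Confounder distribution of MDP `M₂`: `P₂(u=1) = 1/2 + ε`, `P₂(u=2) = 1/2 − ε`. -/
def Pconf2 (ε : ℝ) (u : Fin 2) : ℝ := if u = 0 then 1 / 2 + ε else 1 / 2 - ε

/-- Probability that the next state is `s₁` (index `0`) in MDP `M₁`, given confounder `u`
and action `a` (action `a=1` is index `0`, `a=2` is index `1`); state-independent. -/
def T1 (z₁ z₂ : ℝ) (u a : Fin 2) : ℝ :=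
  if a = 0 then (if u = 0 then 0 else 1) else (if u = 0 then z₁ else z₂)

/-- Probability that the next state is `s₁` (index `0`) in MDP `M₂`. -/
def T2 (z₁ z₂ : ℝ) (u a : Fin 2) : ℝ :=
  if a = 0 then (if u = 0 then 0 else 1) else (if u = 0 then z₂ else z₁)

/-- The full next-state distribution, given the probability `t` of moving to state `s₁`. -/
def ker (t : ℝ) (s' : Fin 2) : ℝ := if s' = 0 then t else 1 - t

/-- Behavior policy in `M₁`: `π_{b1}(a=1|s,u=1) = 1/2 + ε`, `π_{b1}(a=1|s,u=2) = 1/2 − ε`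
(state-independent). -/
def pib1 (ε : ℝ) (a u : Fin 2) : ℝ :=
  if a = 0 then (if u = 0 then 1 / 2 + ε else 1 / 2 - ε)
  else (if u = 0 then 1 / 2 - ε else 1 / 2 + ε)

/-- Behavior policy in `M₂`: `π_{b2}(a=1|s,u=1) = 1/2 − ε`, `π_{b2}(a=1|s,u=2) = 1/2 + ε`. -/
def pib2 (ε : ℝ) (a u : Fin 2) : ℝ :=
  if a = 0 then (if u = 0 then 1 / 2 - ε else 1 / 2 + ε)
  else (if u = 0 then 1 / 2 + ε else 1 / 2 - ε)

/-- `H`-step value recursion under the evaluation policy `π_e(a=1|s) = 1`: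
`V_{H+1} = 0` and `V_h = p·(r(1) + V_{h+1}(1)) + (1−p)·(r(2) + V_{h+1}(2))`
with `r(1) = 1`, `r(2) = 0`, where `p` is the (state-independent) probability of
transitioning to state `s₁` under `a = 1`. -/
def Vrec (p : ℝ) : ℕ → ℝ
  | 0 => 0
  | (n + 1) => p * (1 + Vrec p n) + (1 - p) * (0 + Vrec p n)

lemma Vrec_eq (p : ℝ) : ∀ n : ℕ, Vrec p n = n * p
  | 0 => by simp [Vrec]
  | (n+1) => by simp [Vrec, Vrec_eq p n]; push_cast; ring

/-- Two observationally indistinguishable confounded MDPs whose evaluation-policy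
values differ by exactly `2εH`. -/
theorem confounded_mdp_indistinguishable_value_gap
    (ε z₁ z₂ : ℝ) (hε0 : 0 ≤ ε) (hε : ε ≤ 1 / 2)
    (hz₁0 : 0 ≤ z₁) (hz₁1 : z₁ ≤ 1) (hz₂0 : 0 ≤ z₂) (hz₂1 : z₂ ≤ 1)
    (H : ℕ) (hH : 1 ≤ H) :
    -- (a) the observed joint data distributions agree for all (s, a, s')
    (∀ _s a s' : Fin 2,
      ∑ u : Fin 2, Pconf1 ε u * pib1 ε a u * ker (T1 z₁ z₂ u a) s' =
      ∑ u : Fin 2, Pconf2 ε u * pib2 ε a u * ker (T2 z₁ z₂ u a) s') ∧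
    -- (b) the marginalized probabilities p_i of reaching s₁ under a = 1 differ by 2ε
    ((∑ u : Fin 2, Pconf1 ε u * T1 z₁ z₂ u 0) -
      (∑ u : Fin 2, Pconf2 ε u * T2 z₁ z₂ u 0) = 2 * ε) ∧
    -- the H-step values are H·p_i
    (Vrec (∑ u : Fin 2, Pconf1 ε u * T1 z₁ z₂ u 0) H =
      H * ∑ u : Fin 2, Pconf1 ε u * T1 z₁ z₂ u 0) ∧
    (Vrec (∑ u : Fin 2, Pconf2 ε u * T2 z₁ z₂ u 0) H =
      H * ∑ u : Fin 2, Pconf2 ε u * T2 z₁ z₂ u 0) ∧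
    -- and they differ by exactly 2εH
    (Vrec (∑ u : Fin 2, Pconf1 ε u * T1 z₁ z₂ u 0) H -
      Vrec (∑ u : Fin 2, Pconf2 ε u * T2 z₁ z₂ u 0) H = 2 * ε * H) := by
  have key : ∀ a s' : Fin 2,
      ∑ u : Fin 2, Pconf1 ε u * pib1 ε a u * ker (T1 z₁ z₂ u a) s' =
      ∑ u : Fin 2, Pconf2 ε u * pib2 ε a u * ker (T2 z₁ z₂ u a) s' := by
    intro a s'
    fin_cases a <;> fin_cases s' <;>
      simp [Fin.sum_univ_two, Pconf1, Pconf2, pib1, pib2, T1, T2, ker] <;> ring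
  have hdiff : (∑ u : Fin 2, Pconf1 ε u * T1 z₁ z₂ u 0) -
      (∑ u : Fin 2, Pconf2 ε u * T2 z₁ z₂ u 0) = 2 * ε := by
    simp [Fin.sum_univ_two, Pconf1, Pconf2, T1, T2]; ring
  refine ⟨fun _ a s' => key a s', hdiff, Vrec_eq _ H, Vrec_eq _ H, ?_⟩
  rw [Vrec_eq, Vrec_eq, ← mul_sub, hdiff]; ring
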